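/- Let ε > 0, 0 ≤ η < ε⁻², and v = (v₁,v₂) ∈ ℝ² with v ≠ 0, and define η₊ := (1/ε²)·(1 − |v₂|/|v|) + (|v₂|/|v|)·η. Then: (i) for every m̃ > 0, if |v₁| ≥ m̃ then (1+|v|)²·η₊ ≥ m̃²/(2ε²); (ii) for every m ∈ (0,1], if |v₁| ≥ m·|v₂| then η₊ ≥ m²/(4ε²). -/

import Mathlib

/-- Lower bounds on the turning height `η₊` (equation (22.5)) used in the L^∞ estimates
of Lemmas 1.1 and 1.2. -/
theorem turning_height_lower_bounds
    (ε η : ℝ) (hε : 0 < ε) (hη0 : 0 ≤ η) (hη : η < (ε ^ 2)⁻¹)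
    (v : ℝ × ℝ) (hv : v ≠ 0) :
    let vnorm : ℝ := Real.sqrt (v.1 ^ 2 + v.2 ^ 2)
    let ηp : ℝ := (1 / ε ^ 2) * (1 - |v.2| / vnorm) + (|v.2| / vnorm) * η
    (∀ mt : ℝ, 0 < mt → mt ≤ |v.1| →
      mt ^ 2 / (2 * ε ^ 2) ≤ (1 + vnorm) ^ 2 * ηp) ∧
    (∀ m : ℝ, 0 < m → m ≤ 1 → m * |v.2| ≤ |v.1| →
      m ^ 2 / (4 * ε ^ 2) ≤ ηp) := by
  intro n ηp
  have hsum : 0 < v.1 ^ 2 + v.2 ^ 2 := by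
    have : v.1 ≠ 0 ∨ v.2 ≠ 0 := by
      by_contra hc
      push_neg at hc
      exact hv (Prod.ext hc.1 hc.2)
    rcases this with h | h <;> positivity
  have hn : 0 < n := Real.sqrt_pos.mpr hsum
  have hn2 : n ^ 2 = v.1 ^ 2 + v.2 ^ 2 := Real.sq_sqrt hsum.le
  have hb : |v.2| ≤ n := by
    rw [show |v.2| = Real.sqrt (v.2 ^ 2) from (Real.sqrt_sq_eq_abs v.2).symm]
    exact Real.sqrt_le_sqrt (by nlinarith)
  have hb0 : 0 ≤ |v.2| := abs_nonneg _
  have hε2 : (0:ℝ) < ε ^ 2 := by positivity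
  -- key inequality: 1 - |v.2|/n ≥ v.1^2 / (2 n^2)
  have hkey : v.1 ^ 2 / (2 * n ^ 2) ≤ 1 - |v.2| / n := by
    rw [div_le_iff₀ (by positivity)]
    have h1 : |v.2| / n ≤ 1 := by rw [div_le_one hn]; exact hb
    have habs : |v.2| ^ 2 = v.2 ^ 2 := sq_abs v.2
    have : n * (1 - |v.2| / n) = n - |v.2| := by field_simp
    nlinarith [mul_le_mul_of_nonneg_left h1 hn.le]
  have hbn : 0 ≤ |v.2| / n * η := by positivity
  have hηp : v.1 ^ 2 / (2 * ε ^ 2 * n ^ 2) ≤ ηp := by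
    have heq : v.1 ^ 2 / (2 * ε ^ 2 * n ^ 2) = (1 / ε ^ 2) * (v.1 ^ 2 / (2 * n ^ 2)) := by
      field_simp
    rw [heq]
    have h2 := mul_le_mul_of_nonneg_left hkey (by positivity : (0:ℝ) ≤ 1 / ε ^ 2)
    calc (1 / ε ^ 2) * (v.1 ^ 2 / (2 * n ^ 2)) ≤ (1 / ε ^ 2) * (1 - |v.2| / n) := h2
      _ ≤ ηp := le_add_of_nonneg_right hbn
  have hηp0 : 0 ≤ ηp := le_trans (by positivity) hηp
  clear_value ηp
  clear_value n
  constructor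
  · intro mt hmt hmtv
    have h1 : mt ^ 2 ≤ v.1 ^ 2 := by nlinarith [sq_abs v.1, abs_nonneg v.1]
    have h2 : (1 + n) ^ 2 * ηp ≥ n ^ 2 * ηp := by nlinarith
    have h3 : n ^ 2 * (v.1 ^ 2 / (2 * ε ^ 2 * n ^ 2)) = v.1 ^ 2 / (2 * ε ^ 2) := by
      field_simp
    have h4 : n ^ 2 * ηp ≥ v.1 ^ 2 / (2 * ε ^ 2) := by
      rw [← h3]; exact mul_le_mul_of_nonneg_left hηp (by positivity)
    have h5 : mt ^ 2 / (2 * ε ^ 2) ≤ v.1 ^ 2 / (2 * ε ^ 2) := by gcongr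
    exact h5.trans (h4.trans h2)
  · intro m hm hm1 hmv
    have h1 : m ^ 2 * v.2 ^ 2 ≤ v.1 ^ 2 := by
      nlinarith [mul_le_mul hmv hmv (by positivity) (abs_nonneg v.1), sq_abs v.1, sq_abs v.2]
    have hsq : m ^ 2 ≤ 1 := by nlinarith
    have e1 : ε ^ 2 * (m ^ 2 * v.2 ^ 2) ≤ ε ^ 2 * v.1 ^ 2 :=
      mul_le_mul_of_nonneg_left h1 hε2.le
    have e2 : ε ^ 2 * v.1 ^ 2 * m ^ 2 ≤ ε ^ 2 * v.1 ^ 2 * 1 :=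
      mul_le_mul_of_nonneg_left hsq (by positivity)
    have h2 : m ^ 2 / (4 * ε ^ 2) ≤ v.1 ^ 2 / (2 * ε ^ 2 * n ^ 2) := by
      rw [div_le_div_iff₀ (by positivity) (by positivity), hn2]
      nlinarith [e1, e2]
    linarith
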